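/- Let ζ be a primitive 33rd root of unity in C and w = x1^2*x2 + x2^2*x3 + x3^2*x4 + x4^2*x5 + x5^2*x1. Then the element g = (ζ, ζ^{-2}, ζ^{4}, ζ^{-8}, ζ^{16}) belongs to G_w = {(t1,...,t5) in (C*)^5 : t_i^2 t_{i+1} = 1 for all i (indices mod 5)} and generates it; in particular G_w is cyclic of order 33. -/

import Mathlib

lemma step_eq {t : Fin 5 → ℂˣ} (i : Fin 5) (h : t i ^ 2 * t (i + 1) = 1) :
    t (i + 1) = t i ^ (-2 : ℤ) := by
  have : t (i + 1) = (t i ^ 2)⁻¹ := eq_inv_of_mul_eq_one_left (by rw [mul_comm]; exact h)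
  rw [this]
  rw [zpow_neg, zpow_ofNat]

/-- For `w = x1²x2 + x2²x3 + x3²x4 + x4²x5 + x5²x1` and `ζ` a primitive 33rd root of
unity, the element `g = (ζ, ζ⁻², ζ⁴, ζ⁻⁸, ζ¹⁶)` lies in the diagonal symmetry group
`G_w = {t ∈ (ℂ*)^5 | t_i² t_{i+1} = 1 (indices mod 5)}`, generates it, and has order 33;
in particular `G_w` is cyclic of order 33. -/
theorem gw_cyclic_of_order_33 (ζ : ℂˣ) (hζ : IsPrimitiveRoot ζ 33)
    (g : Fin 5 → ℂˣ)
    (hg : g = ![ζ, ζ ^ (-2 : ℤ), ζ ^ (4 : ℤ), ζ ^ (-8 : ℤ), ζ ^ (16 : ℤ)]) :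
    (∀ i : Fin 5, g i ^ 2 * g (i + 1) = 1) ∧
    (∀ t : Fin 5 → ℂˣ, (∀ i : Fin 5, t i ^ 2 * t (i + 1) = 1) → ∃ k : ℤ, t = g ^ k) ∧
    orderOf g = 33 := by
  have h33 : ζ ^ (33 : ℕ) = 1 := hζ.pow_eq_one
  have hz : ζ ^ (33 : ℤ) = 1 := by exact_mod_cast h33
  subst hg
  refine ⟨?_, ?_, ?_⟩
  · intro i
    fin_cases i
    · show ζ ^ 2 * ζ ^ (-2:ℤ) = 1
      rw [← zpow_natCast ζ 2, ← zpow_add]; norm_num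
    · show (ζ ^ (-2:ℤ)) ^ 2 * ζ ^ (4:ℤ) = 1
      rw [← zpow_natCast (ζ ^ (-2:ℤ)) 2, ← zpow_mul, ← zpow_add]; norm_num
    · show (ζ ^ (4:ℤ)) ^ 2 * ζ ^ (-8:ℤ) = 1
      rw [← zpow_natCast (ζ ^ (4:ℤ)) 2, ← zpow_mul, ← zpow_add]; norm_num
    · show (ζ ^ (-8:ℤ)) ^ 2 * ζ ^ (16:ℤ) = 1
      rw [← zpow_natCast (ζ ^ (-8:ℤ)) 2, ← zpow_mul, ← zpow_add]; norm_num
    · show (ζ ^ (16:ℤ)) ^ 2 * ζ = 1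
      rw [← zpow_natCast (ζ ^ (16:ℤ)) 2, ← zpow_mul]
      nth_rewrite 2 [← zpow_one ζ]
      rw [← zpow_add, show (16:ℤ) * (2:ℕ) + 1 = 33 from by norm_num]
      exact hz
  · intro t ht
    have h1 := step_eq 0 (ht 0)
    have h2 := step_eq 1 (ht 1)
    have h3 := step_eq 2 (ht 2)
    have h4 := step_eq 3 (ht 3)
    simp only [show (0:Fin 5)+1 = 1 from rfl, show (1:Fin 5)+1 = 2 from rfl,
      show (2:Fin 5)+1 = 3 from rfl, show (3:Fin 5)+1 = 4 from rfl] at h1 h2 h3 h4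
    have e2 : t 2 = t 0 ^ (4 : ℤ) := by rw [h2, h1, ← zpow_mul]; norm_num
    have e3 : t 3 = t 0 ^ (-8 : ℤ) := by rw [h3, e2, ← zpow_mul]; norm_num
    have e4 : t 4 = t 0 ^ (16 : ℤ) := by rw [h4, e3, ← zpow_mul]; norm_num
    have h5 := ht 4
    rw [show (4:Fin 5)+1 = 0 from rfl, e4] at h5
    have h0 : t 0 ^ (33 : ℕ) = 1 := by
      have heq : (t 0 ^ (16 : ℤ)) ^ 2 * t 0 = t 0 ^ (33 : ℕ) := by
        rw [← zpow_natCast (t 0 ^ (16:ℤ)) 2, ← zpow_mul, ← zpow_natCast (t 0) 33]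
        nth_rewrite 2 [← zpow_one (t 0)]
        rw [← zpow_add]
        norm_num
      rw [← heq]; exact h5
    have h0' : ((t 0 : ℂ)) ^ (33 : ℕ) = 1 := by rw [← Units.val_pow_eq_pow_val, h0, Units.val_one]
    have hζ' : IsPrimitiveRoot (ζ : ℂ) 33 := IsPrimitiveRoot.coe_units_iff.mpr hζ
    obtain ⟨k, -, hk⟩ := hζ'.eq_pow_of_pow_eq_one h0'
    have hk' : t 0 = ζ ^ (k : ℤ) := by
      apply Units.ext
      push_cast
      rw [← hk]
      norm_cast
    refine ⟨(k : ℤ), ?_⟩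
    funext i
    fin_cases i
    · exact hk'
    · show t 1 = (ζ ^ (-2:ℤ)) ^ (k:ℤ)
      rw [h1, hk', ← zpow_mul, ← zpow_mul, Int.mul_comm]
    · show t 2 = (ζ ^ (4:ℤ)) ^ (k:ℤ)
      rw [e2, hk', ← zpow_mul, ← zpow_mul, Int.mul_comm]
    · show t 3 = (ζ ^ (-8:ℤ)) ^ (k:ℤ)
      rw [e3, hk', ← zpow_mul, ← zpow_mul, Int.mul_comm]
    · show t 4 = (ζ ^ (16:ℤ)) ^ (k:ℤ)
      rw [e4, hk', ← zpow_mul, ← zpow_mul, Int.mul_comm]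
  · have key : ∀ c : ℤ, (ζ ^ c) ^ (33 : ℕ) = 1 := by
      intro c
      rw [← zpow_natCast (ζ ^ c), ← zpow_mul, mul_comm, zpow_mul,
        show ((33:ℕ):ℤ) = (33:ℤ) from by norm_cast, hz, one_zpow]
    have hdvd1 : orderOf (![ζ, ζ ^ (-2 : ℤ), ζ ^ (4 : ℤ), ζ ^ (-8 : ℤ), ζ ^ (16 : ℤ)]) ∣ 33 := by
      apply orderOf_dvd_of_pow_eq_one
      funext i
      fin_cases i
      · show ζ ^ (33:ℕ) = 1; exact h33
      · exact key (-2)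
      · exact key 4
      · exact key (-8)
      · exact key 16
    have hdvd2 : 33 ∣ orderOf (![ζ, ζ ^ (-2 : ℤ), ζ ^ (4 : ℤ), ζ ^ (-8 : ℤ), ζ ^ (16 : ℤ)]) := by
      apply hζ.dvd_of_pow_eq_one
      have h := congrFun (pow_orderOf_eq_one
        (![ζ, ζ ^ (-2 : ℤ), ζ ^ (4 : ℤ), ζ ^ (-8 : ℤ), ζ ^ (16 : ℤ)])) 0
      exact h
    exact Nat.dvd_antisymm hdvd1 hdvd2
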